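/- Let Ω be a set and Σ : Ω × Ω → ℝ with Σ(P,P) = 0 for all P; let G and A be its symmetric and antisymmetric parts. Let P₀,P₁,P₂ ∈ Ω, write G_{ik} = G(Pᵢ,Pₖ), A_{ik} = A(Pᵢ,Pₖ), and η_f = A₁₀ + A₀₂ + A₂₁, and assume G₀₂ ≥ 0, G₁₀ ≥ 0 and G₁₂ − η_f ≥ 0. Then the quantity F_f(P₀,P₁,P₂) = |P₀P₁|²·|P₀P₂|² − (P₀P₁.P₀P₂)² factorizes as F_f = −F₀·F₁·F₂·F₃, where F₀ = √G₀₂ + √G₁₀ + √(G₁₂ − η_f), F₁ = √G₀₂ − √G₁₀ + √(G₁₂ − η_f), F₂ = √G₀₂ + √G₁₀ − √(G₁₂ − η_f), F₃ = √G₀₂ − √G₁₀ − √(G₁₂ − η_f). (Factorization of the future first order tube equation.) -/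
import Mathlib


/-- The scalar Σ-product `(P₀P₁.Q₀Q₁) = Σ(P₀,Q₁) − Σ(P₁,Q₁) − Σ(P₀,Q₀) + Σ(P₁,Q₀)`. -/
def ssp {Ω : Type} (W : Ω → Ω → ℝ) (P0 P1 Q0 Q1 : Ω) : ℝ :=
  W P0 Q1 - W P1 Q1 - W P0 Q0 + W P1 Q0

/-- The symmetric part `G(P,Q) = ½(Σ(P,Q) + Σ(Q,P))` of the world function. -/
noncomputable def Gpart {Ω : Type} (W : Ω → Ω → ℝ) (P Q : Ω) : ℝ := (1 / 2) * (W P Q + W Q P)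

/-- The antisymmetric part `A(P,Q) = ½(Σ(P,Q) − Σ(Q,P))` of the world function. -/
noncomputable def Apart {Ω : Type} (W : Ω → Ω → ℝ) (P Q : Ω) : ℝ := (1 / 2) * (W P Q - W Q P)

/-- Factorization of the future first order tube equation:
`F_f = |P₀P₁|²·|P₀P₂|² − (P₀P₁.P₀P₂)² = −F₀·F₁·F₂·F₃`. -/
theorem future_tube_factorization
    (Ω : Type) (W : Ω → Ω → ℝ) (hzero : ∀ P, W P P = 0) (P0 P1 P2 : Ω)
    (h02 : 0 ≤ Gpart W P0 P2) (h10 : 0 ≤ Gpart W P1 P0)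
    (h12 : 0 ≤ Gpart W P1 P2 -
      (Apart W P1 P0 + Apart W P0 P2 + Apart W P2 P1)) :
    ssp W P0 P1 P0 P1 * ssp W P0 P2 P0 P2 - (ssp W P0 P1 P0 P2) ^ 2 =
      -((Real.sqrt (Gpart W P0 P2) + Real.sqrt (Gpart W P1 P0) +
          Real.sqrt (Gpart W P1 P2 -
            (Apart W P1 P0 + Apart W P0 P2 + Apart W P2 P1))) *
        (Real.sqrt (Gpart W P0 P2) - Real.sqrt (Gpart W P1 P0) +
          Real.sqrt (Gpart W P1 P2 -
            (Apart W P1 P0 + Apart W P0 P2 + Apart W P2 P1))) *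
        (Real.sqrt (Gpart W P0 P2) + Real.sqrt (Gpart W P1 P0) -
          Real.sqrt (Gpart W P1 P2 -
            (Apart W P1 P0 + Apart W P0 P2 + Apart W P2 P1))) *
        (Real.sqrt (Gpart W P0 P2) - Real.sqrt (Gpart W P1 P0) -
          Real.sqrt (Gpart W P1 P2 -
            (Apart W P1 P0 + Apart W P0 P2 + Apart W P2 P1)))) := by

  set a := Real.sqrt (Gpart W P0 P2) with ha
  set b := Real.sqrt (Gpart W P1 P0) with hb
  set c := Real.sqrt (Gpart W P1 P2 -
      (Apart W P1 P0 + Apart W P0 P2 + Apart W P2 P1)) with hc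
  have ha2 : a ^ 2 = Gpart W P0 P2 := Real.sq_sqrt h02
  have hb2 : b ^ 2 = Gpart W P1 P0 := Real.sq_sqrt h10
  have hc2 : c ^ 2 = Gpart W P1 P2 -
      (Apart W P1 P0 + Apart W P0 P2 + Apart W P2 P1) := Real.sq_sqrt h12
  have key : (a + b + c) * (a - b + c) * (a + b - c) * (a - b - c)
      = a^2*a^2 + b^2*b^2 + c^2*c^2 - 2*(a^2*b^2 + a^2*c^2 + b^2*c^2) := by ring
  rw [key, ha2, hb2, hc2]
  simp only [ssp, Gpart, Apart, hzero]
  ring
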